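/- Let U = {(x,y) ∈ ℝ² : y > 0} be the upper half-plane, and let d_m be the length metric induced by the norm ‖v‖_m = max{‖v‖_e, ‖v‖_h} on U, where ‖v‖_e is the Euclidean norm and ‖v‖_h = ‖v‖_e / y is the hyperbolic norm at the point (x,y). Then for all 0 < y₁ < 1 < y₂, the distance between the points (0, y₁) and (0, y₂) satisfies d_m((0,y₁), (0,y₂)) = (y₂ − 1) − log(y₁). -/

import Mathlib

open Set
open MeasureTheory
open scoped ENNReal

noncomputable section

namespace HalfplaneAux

/-- The antiderivative of `max 1 y⁻¹`. -/
noncomputable def F : ℝ → ℝ := fun y => if y ≤ 1 then Real.log y else y - 1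

lemma F_of_le {y : ℝ} (h : y ≤ 1) : F y = Real.log y := if_pos h

lemma F_of_ge {y : ℝ} (h : 1 ≤ y) : F y = y - 1 := by
  rcases eq_or_lt_of_le h with h | h
  · simp [F, ← h]
  · exact if_neg (not_le.2 h)

lemma F_hasDerivAt {y : ℝ} (hy : 0 < y) : HasDerivAt F (max 1 y⁻¹) y := by
  rcases lt_trichotomy y 1 with h | h | h
  · have hmax : max 1 y⁻¹ = y⁻¹ := max_eq_right (one_le_inv₀ hy |>.2 h.le)
    rw [hmax]
    have : HasDerivAt Real.log y⁻¹ y := Real.hasDerivAt_log hy.ne'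
    apply this.congr_of_eventuallyEq
    filter_upwards [Iio_mem_nhds h] with z hz
    exact F_of_le (le_of_lt hz)
  · subst h
    have hmax : max (1:ℝ) 1⁻¹ = 1 := by norm_num
    rw [hmax]
    have h1 : HasDerivWithinAt F 1 (Iic 1) 1 := by
      have : HasDerivWithinAt Real.log 1 (Iic 1) 1 := by
        simpa using (Real.hasDerivAt_log one_ne_zero).hasDerivWithinAt
      exact this.congr (fun z hz => F_of_le hz) (F_of_le le_rfl)
    have h2 : HasDerivWithinAt F 1 (Ici 1) 1 := by
      have : HasDerivWithinAt (fun z : ℝ => z - 1) 1 (Ici 1) 1 :=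
        ((hasDerivAt_id (1:ℝ)).sub_const 1).hasDerivWithinAt
      exact this.congr (fun z hz => F_of_ge hz) (F_of_ge le_rfl)
    have := h1.union h2
    rwa [Iic_union_Ici, hasDerivWithinAt_univ] at this
  · have hmax : max 1 y⁻¹ = 1 := max_eq_left ((inv_le_one_of_one_le₀ h.le))
    rw [hmax]
    have : HasDerivAt (fun z : ℝ => z - 1) 1 y := (hasDerivAt_id y).sub_const 1
    apply this.congr_of_eventuallyEq
    filter_upwards [Ioi_mem_nhds h] with z hz
    exact F_of_ge (le_of_lt hz)

lemma F_continuousAt {y : ℝ} (hy : 0 < y) : ContinuousAt F y :=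
  (F_hasDerivAt hy).continuousAt

lemma coord_abs_le_norm (x : EuclideanSpace ℝ (Fin 2)) (i : Fin 2) : |x i| ≤ ‖x‖ := by
  rw [EuclideanSpace.norm_eq]
  calc |x i| = Real.sqrt (‖x i‖ ^ 2) := by
        rw [Real.sqrt_sq_eq_abs, Real.norm_eq_abs, abs_abs]
    _ ≤ _ := Real.sqrt_le_sqrt (Finset.single_le_sum
        (f := fun j => ‖x j‖ ^ 2) (fun j _ => sq_nonneg _) (Finset.mem_univ i))

lemma fin_telescope {M : Type*} [AddCommGroup M] : ∀ (k : ℕ) (f : Fin (k+1) → M),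
    ∑ i : Fin k, (f i.succ - f i.castSucc) = f (Fin.last k) - f 0 := by
  intro k
  induction k with
  | zero => intro f; simp
  | succ k ih =>
    intro f
    rw [Fin.sum_univ_castSucc]
    have h1 : ∀ i : Fin k, (i.castSucc).succ = (i.succ).castSucc := by
      intro i; exact Fin.ext rfl
    have := ih (fun j => f j.castSucc)
    simp only [← Fin.succ_castSucc] at this
    calc ∑ i : Fin k, (f (i.castSucc).succ - f (i.castSucc).castSucc)
          + (f (Fin.last k).succ - f (Fin.last k).castSucc)
        = (f ((Fin.last k).castSucc) - f (Fin.castSucc 0))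
          + (f (Fin.last (k+1)) - f ((Fin.last k).castSucc)) := by
          rw [this]; simp [Fin.succ_last]
      _ = f (Fin.last (k+1)) - f 0 := by simp only [Fin.castSucc_zero]; abel

lemma ofReal_sum_le {ι : Type*} (s : Finset ι) (f : ι → ℝ) :
    ENNReal.ofReal (∑ i ∈ s, f i) ≤ ∑ i ∈ s, ENNReal.ofReal (f i) := by
  classical
  induction s using Finset.induction with
  | empty => simp
  | insert _ _ h ih =>
    rw [Finset.sum_insert h, Finset.sum_insert h]
    exact (ENNReal.ofReal_add_le).trans (add_le_add le_rfl ih)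

/-- Lower bound on one `C¹` piece. -/
lemma piece_bound (γ : ℝ → EuclideanSpace ℝ (Fin 2)) (c d : ℝ) (hcd : c ≤ d)
    (hγ : ContDiffOn ℝ 1 γ (Icc c d))
    (hpos : ∀ s ∈ Icc c d, 0 < γ s 1) :
    ENNReal.ofReal (F (γ d 1) - F (γ c 1))
      ≤ ∫⁻ s in Ioc c d, ENNReal.ofReal (max ‖deriv γ s‖ (‖deriv γ s‖ / γ s 1)) := by
  rcases eq_or_lt_of_le hcd with rfl | hlt
  · simp
  set π : EuclideanSpace ℝ (Fin 2) →L[ℝ] ℝ := EuclideanSpace.proj 1 with hπ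
  set φ : ℝ → ℝ := fun s => γ s 1 with hφdef
  have hφ : ContDiffOn ℝ 1 φ (Icc c d) := π.contDiff.comp_contDiffOn hγ
  set φ' : ℝ → ℝ := derivWithin φ (Icc c d) with hφ'def
  have hφ'cont : ContinuousOn φ' (Icc c d) :=
    hφ.continuousOn_derivWithin (uniqueDiffOn_Icc hlt) le_rfl
  set g' : ℝ → ℝ := fun s => max 1 (φ s)⁻¹ * φ' s with hg'def
  set M : ℝ → ℝ := fun s => max 1 (φ s)⁻¹ * |φ' s| with hMdef
  have hφcont : ContinuousOn φ (Icc c d) := hφ.continuousOn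
  have hfac : ContinuousOn (fun s => max 1 (φ s)⁻¹) (Icc c d) :=
    ContinuousOn.sup continuousOn_const (hφcont.inv₀ (fun s hs => (hpos s hs).ne'))
  have hg'cont : ContinuousOn g' (Icc c d) := hfac.mul hφ'cont
  have hMcont : ContinuousOn M (Icc c d) := hfac.mul hφ'cont.abs
  -- derivative facts on the interior
  have hφderiv : ∀ x ∈ Ioo c d, HasDerivAt φ (φ' x) x := by
    intro x hx
    have h1 : DifferentiableWithinAt ℝ φ (Icc c d) x :=
      (hφ.differentiableOn one_ne_zero) x (Ioo_subset_Icc_self hx)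
    exact h1.hasDerivWithinAt.hasDerivAt (Icc_mem_nhds hx.1 hx.2)
  -- FTC
  have hFTC : F (φ d) - F (φ c) = ∫ s in c..d, g' s := by
    rw [intervalIntegral.integral_eq_sub_of_hasDerivAt_of_le hcd ?_ ?_
      (hg'cont.intervalIntegrable_of_Icc hcd)]
    · intro s hs
      exact ContinuousAt.comp_continuousWithinAt (f := φ) (F_continuousAt (hpos s hs)) (hφcont s hs)
    · intro x hx
      exact ((F_hasDerivAt (hpos x (Ioo_subset_Icc_self hx))).comp x (hφderiv x hx))
  have hg'leM : ∀ s ∈ Icc c d, g' s ≤ M s := fun s _ =>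
    mul_le_mul_of_nonneg_left (le_abs_self _) (le_trans zero_le_one (le_max_left _ _))
  have hMnn : ∀ s, 0 ≤ M s := fun s =>
    mul_nonneg (le_trans zero_le_one (le_max_left _ _)) (abs_nonneg _)
  have hMint : IntegrableOn M (Ioc c d) := (hMcont.integrableOn_Icc).mono_set Ioc_subset_Icc_self
  have step1 : F (φ d) - F (φ c) ≤ ∫ s in Ioc c d, M s := by
    rw [hFTC, intervalIntegral.integral_of_le hcd]
    exact MeasureTheory.setIntegral_mono_on
      (hg'cont.intervalIntegrable_of_Icc hcd).1 hMint measurableSet_Ioc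
      (fun s hs => hg'leM s (Ioc_subset_Icc_self hs))
  have step2 : ENNReal.ofReal (∫ s in Ioc c d, M s) = ∫⁻ s in Ioc c d, ENNReal.ofReal (M s) :=
    MeasureTheory.ofReal_integral_eq_lintegral_ofReal hMint
      (Filter.Eventually.of_forall fun s => hMnn s)
  have step3 : (∫⁻ s in Ioc c d, ENNReal.ofReal (M s))
      ≤ ∫⁻ s in Ioc c d, ENNReal.ofReal (max ‖deriv γ s‖ (‖deriv γ s‖ / γ s 1)) := by
    rw [← Measure.restrict_congr_set Ioo_ae_eq_Ioc]
    refine MeasureTheory.setLIntegral_mono' measurableSet_Ioo ?_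
    intro s hs
    have hγd : DifferentiableAt ℝ γ s :=
      ((hγ.differentiableOn one_ne_zero) s (Ioo_subset_Icc_self hs)).differentiableAt
        (Icc_mem_nhds hs.1 hs.2)
    have hγder : HasDerivAt γ (deriv γ s) s := hγd.hasDerivAt
    have hcomp : HasDerivAt φ ((deriv γ s) 1) s := by
      have := π.hasFDerivAt.comp_hasDerivAt s hγder
      exact this
    have hφ'eq : φ' s = (deriv γ s) 1 := by
      have := (hφderiv s hs).unique hcomp
      exact this
    apply ENNReal.ofReal_le_ofReal
    have hb : |φ' s| ≤ ‖deriv γ s‖ := by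
      rw [hφ'eq]; exact coord_abs_le_norm _ _
    calc M s ≤ max 1 (φ s)⁻¹ * ‖deriv γ s‖ :=
          mul_le_mul_of_nonneg_left hb (le_trans zero_le_one (le_max_left _ _))
      _ = max ‖deriv γ s‖ (‖deriv γ s‖ / γ s 1) := by
          rw [max_mul_of_nonneg _ _ (norm_nonneg _), one_mul, div_eq_mul_inv, mul_comm]
  calc ENNReal.ofReal (F (γ d 1) - F (γ c 1)) ≤ ENNReal.ofReal (∫ s in Ioc c d, M s) :=
        ENNReal.ofReal_le_ofReal step1
    _ = _ := step2
    _ ≤ _ := step3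

end HalfplaneAux
noncomputable section

variable {n : ℕ}

/-- A path `γ : [a,b] → ℝⁿ` is piecewise `C¹`: continuous on `[a,b]` and `C¹` on each
piece of some partition `a = T₀ ≤ … ≤ T_k = b`. -/
def IsPiecewiseC1On (γ : ℝ → EuclideanSpace ℝ (Fin n)) (a b : ℝ) : Prop :=
  a ≤ b ∧ ContinuousOn γ (Icc a b) ∧
  ∃ (k : ℕ) (T : Fin (k + 1) → ℝ), Monotone T ∧ T 0 = a ∧ T (Fin.last k) = b ∧
    ∀ i : Fin k, ContDiffOn ℝ 1 γ (Icc (T i.castSucc) (T i.succ))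

/-- The length of a path `γ : [a,b] → ℝⁿ` with respect to a family of (weak) norms
`L (point) (vector)`: `∫ₐᵇ L (γ s) (γ̇ s) ds`. -/
noncomputable def lagrangianLen
    (L : EuclideanSpace ℝ (Fin n) → EuclideanSpace ℝ (Fin n) → ℝ)
    (γ : ℝ → EuclideanSpace ℝ (Fin n)) (a b : ℝ) : ℝ≥0∞ :=
  ∫⁻ s in Icc a b, ENNReal.ofReal (L (γ s) (deriv γ s))

/-- The length metric induced on `Ω ⊆ ℝⁿ` by the family of norms `L`: the infimum of the
`L`-lengths of piecewise `C¹` paths staying in `Ω` that join `x` to `y`. -/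
noncomputable def lagrangianDist (Ω : Set (EuclideanSpace ℝ (Fin n)))
    (L : EuclideanSpace ℝ (Fin n) → EuclideanSpace ℝ (Fin n) → ℝ)
    (x y : EuclideanSpace ℝ (Fin n)) : ℝ≥0∞ :=
  ⨅ (γ : ℝ → EuclideanSpace ℝ (Fin n)) (a : ℝ) (b : ℝ)
    (_ : IsPiecewiseC1On γ a b ∧ MapsTo γ (Icc a b) Ω ∧ γ a = x ∧ γ b = y),
    lagrangianLen L γ a b

open HalfplaneAux in
/-- On the upper half-plane `U = {(x,y) ∈ ℝ² | y > 0}`, let `d_m` be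
the length metric induced by the pointwise maximum `‖v‖_m = max {‖v‖_e, ‖v‖_h}` of the
Euclidean norm `‖v‖_e` and the hyperbolic norm `‖v‖_h = ‖v‖_e / y`. Then for all
`0 < y₁ < 1 < y₂`, the distance between `(0, y₁)` and `(0, y₂)` is
`d_m((0,y₁),(0,y₂)) = (y₂ − 1) − log y₁`. -/
theorem halfplane_max_metric_dist (y₁ y₂ : ℝ)
    (h₀ : 0 < y₁) (h₁ : y₁ < 1) (h₂ : 1 < y₂)
    (p q : EuclideanSpace ℝ (Fin 2))
    (hp0 : p 0 = 0) (hp1 : p 1 = y₁) (hq0 : q 0 = 0) (hq1 : q 1 = y₂) :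
    lagrangianDist {z : EuclideanSpace ℝ (Fin 2) | 0 < z 1}
        (fun z v => max ‖v‖ (‖v‖ / z 1)) p q
      = ENNReal.ofReal ((y₂ - 1) - Real.log y₁) := by
  have hyy : y₁ < y₂ := h₁.trans h₂
  apply le_antisymm
  · -- Upper bound: the vertical segment
    set v : EuclideanSpace ℝ (Fin 2) := (y₂ - y₁)⁻¹ • (q - p) with hv
    have hne : y₂ - y₁ ≠ 0 := sub_ne_zero.2 hyy.ne'
    have hv0 : v 0 = 0 := by
      simp [hv, PiLp.smul_apply, PiLp.sub_apply, hp0, hq0]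
    have hv1 : v 1 = 1 := by
      simp [hv, PiLp.smul_apply, PiLp.sub_apply, hp1, hq1, smul_eq_mul,
        inv_mul_cancel₀ hne]
    set γ : ℝ → EuclideanSpace ℝ (Fin 2) := fun t => p + (t - y₁) • v with hγdef
    have hder : ∀ t, HasDerivAt γ v t := by
      intro t
      simpa [hγdef] using (((hasDerivAt_id t).sub_const y₁).smul_const v).const_add p
    have hderiv : ∀ t, deriv γ t = v := fun t => (hder t).deriv
    have hcoord : ∀ t, γ t 1 = t := by
      intro t
      simp [hγdef, PiLp.add_apply, PiLp.smul_apply, hp1, hv1, smul_eq_mul]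
    have hnorm : ‖v‖ = 1 := by
      rw [EuclideanSpace.norm_eq]
      simp [Fin.sum_univ_two, hv0, hv1]
    have hγa : γ y₁ = p := by simp [hγdef]
    have hγb : γ y₂ = q := by
      rw [hγdef]
      simp only [hv, smul_smul, mul_inv_cancel₀ hne, one_smul]
      abel
    have hcd : ContDiff ℝ 1 γ :=
      contDiff_const.add ((contDiff_id.sub contDiff_const).smul contDiff_const)
    have hmapsγ : MapsTo γ (Icc y₁ y₂) {z : EuclideanSpace ℝ (Fin 2) | 0 < z 1} := by
      intro t ht
      simp only [mem_setOf_eq, hcoord]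
      exact h₀.trans_le ht.1
    have hpc : IsPiecewiseC1On γ y₁ y₂ := by
      refine ⟨hyy.le, hcd.continuous.continuousOn, 1, ![y₁, y₂], ?_, rfl, rfl, ?_⟩
      · intro i j hij
        fin_cases i <;> fin_cases j <;> simp_all <;> first | rfl | exact hyy.le | omega
      · intro i; exact hcd.contDiffOn
    have hlen : lagrangianLen (fun z v => max ‖v‖ (‖v‖ / z 1)) γ y₁ y₂
        = ENNReal.ofReal ((y₂ - 1) - Real.log y₁) := by
      have hfc : ContinuousOn (fun s : ℝ => max 1 (1 / s)) (Icc y₁ y₂) :=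
        ContinuousOn.sup continuousOn_const
          (continuousOn_const.div continuousOn_id
            (fun s hs => (h₀.trans_le hs.1).ne'))
      have hfnn : ∀ s : ℝ, 0 ≤ max 1 (1 / s) := fun s =>
        le_trans zero_le_one (le_max_left _ _)
      have hi1 : IntervalIntegrable (fun s : ℝ => max 1 (1 / s)) MeasureTheory.volume y₁ 1 := by
        apply ContinuousOn.intervalIntegrable
        apply hfc.mono
        rw [uIcc_of_le h₁.le]
        exact Icc_subset_Icc le_rfl h₂.le
      have hi2 : IntervalIntegrable (fun s : ℝ => max 1 (1 / s)) MeasureTheory.volume 1 y₂ := by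
        apply ContinuousOn.intervalIntegrable
        apply hfc.mono
        rw [uIcc_of_le h₂.le]
        exact Icc_subset_Icc h₁.le le_rfl
      have hval : ∫ s in Icc y₁ y₂, max 1 (1 / s) = (y₂ - 1) - Real.log y₁ := by
        rw [MeasureTheory.integral_Icc_eq_integral_Ioc,
          ← intervalIntegral.integral_of_le hyy.le,
          ← intervalIntegral.integral_add_adjacent_intervals (a := y₁) (b := 1) (c := y₂)
            hi1 hi2]
        have e1 : ∫ s in y₁..1, max 1 (1 / s) = ∫ s in y₁..1, s⁻¹ := by
          apply intervalIntegral.integral_congr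
          intro s hs
          rw [uIcc_of_le h₁.le] at hs
          dsimp only
          rw [one_div, max_eq_right (one_le_inv₀ (h₀.trans_le hs.1) |>.2 hs.2)]
        have e2 : ∫ s in (1:ℝ)..y₂, max 1 (1 / s) = ∫ s in (1:ℝ)..y₂, (1:ℝ) := by
          apply intervalIntegral.integral_congr
          intro s hs
          rw [uIcc_of_le h₂.le] at hs
          dsimp only
          rw [max_eq_left (div_le_one_of_le₀ hs.1 (zero_le_one.trans hs.1))]
        rw [e1, e2, integral_inv_of_pos h₀ one_pos, integral_one,
          one_div, Real.log_inv]
        ring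
      calc lagrangianLen (fun z v => max ‖v‖ (‖v‖ / z 1)) γ y₁ y₂
          = ∫⁻ s in Icc y₁ y₂, ENNReal.ofReal (max 1 (1 / s)) := by
            simp only [lagrangianLen, hderiv, hcoord, hnorm]
        _ = ENNReal.ofReal (∫ s in Icc y₁ y₂, max 1 (1 / s)) :=
            (MeasureTheory.ofReal_integral_eq_lintegral_ofReal
              (hfc.integrableOn_Icc)
              (Filter.Eventually.of_forall fun s => hfnn s)).symm
        _ = ENNReal.ofReal ((y₂ - 1) - Real.log y₁) := by rw [hval]
    calc lagrangianDist {z : EuclideanSpace ℝ (Fin 2) | 0 < z 1}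
          (fun z v => max ‖v‖ (‖v‖ / z 1)) p q
        ≤ lagrangianLen (fun z v => max ‖v‖ (‖v‖ / z 1)) γ y₁ y₂ :=
          iInf_le_of_le γ <| iInf_le_of_le y₁ <| iInf_le_of_le y₂ <|
            iInf_le_of_le ⟨hpc, hmapsγ, hγa, hγb⟩ le_rfl
      _ = _ := hlen
  · -- Lower bound
    refine le_iInf fun γ => le_iInf fun a => le_iInf fun b => le_iInf fun h => ?_
    obtain ⟨⟨hab, hcont, k, T, hT, hT0, hTl, hC1⟩, hmaps, hga, hgb⟩ := h
    have hsub : ∀ i : Fin k, Icc (T i.castSucc) (T i.succ) ⊆ Icc a b := by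
      intro i
      apply Icc_subset_Icc
      · rw [← hT0]; exact hT (Fin.zero_le _)
      · rw [← hTl]; exact hT (Fin.le_last _)
    have hpos : ∀ i : Fin k, ∀ s ∈ Icc (T i.castSucc) (T i.succ), 0 < γ s 1 :=
      fun i s hs => hmaps (hsub i hs)
    have key : ∀ i : Fin k,
        ENNReal.ofReal (F (γ (T i.succ) 1) - F (γ (T i.castSucc) 1))
          ≤ ∫⁻ s in Ioc (T i.castSucc) (T i.succ),
              ENNReal.ofReal (max ‖deriv γ s‖ (‖deriv γ s‖ / γ s 1)) :=
      fun i => piece_bound γ _ _ (hT (Fin.castSucc_lt_succ : i.castSucc < i.succ).le) (hC1 i) (hpos i)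
    have htel : (y₂ - 1) - Real.log y₁
        = ∑ i : Fin k, (F (γ (T i.succ) 1) - F (γ (T i.castSucc) 1)) := by
      rw [fin_telescope k (fun j => F (γ (T j) 1)), hT0, hTl, hga, hgb, hp1, hq1,
        F_of_ge h₂.le, F_of_le h₁.le]
    have hdisj : Pairwise (Function.onFun Disjoint
        fun i : Fin k => Ioc (T i.castSucc) (T i.succ)) := by
      intro i j hij
      rcases hij.lt_or_gt with hlt | hlt
      · exact Set.Ioc_disjoint_Ioc.2 (le_trans (min_le_left _ _)
          (le_trans (hT (Fin.succ_le_castSucc_iff.2 hlt)) (le_max_right _ _)))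
      · exact Set.Ioc_disjoint_Ioc.2 (le_trans (min_le_right _ _)
          (le_trans (hT (Fin.succ_le_castSucc_iff.2 hlt)) (le_max_left _ _)))
    calc ENNReal.ofReal ((y₂ - 1) - Real.log y₁)
        = ENNReal.ofReal (∑ i : Fin k, (F (γ (T i.succ) 1) - F (γ (T i.castSucc) 1))) := by
          rw [← htel]
      _ ≤ ∑ i : Fin k, ENNReal.ofReal (F (γ (T i.succ) 1) - F (γ (T i.castSucc) 1)) :=
          ofReal_sum_le _ _
      _ ≤ ∑ i : Fin k, ∫⁻ s in Ioc (T i.castSucc) (T i.succ),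
            ENNReal.ofReal (max ‖deriv γ s‖ (‖deriv γ s‖ / γ s 1)) :=
          Finset.sum_le_sum fun i _ => key i
      _ = ∫⁻ s in ⋃ i : Fin k, Ioc (T i.castSucc) (T i.succ),
            ENNReal.ofReal (max ‖deriv γ s‖ (‖deriv γ s‖ / γ s 1)) := by
          rw [MeasureTheory.lintegral_iUnion (fun i => measurableSet_Ioc) hdisj,
            tsum_fintype]
      _ ≤ lagrangianLen (fun z v => max ‖v‖ (‖v‖ / z 1)) γ a b := by
          simp only [lagrangianLen]
          exact MeasureTheory.lintegral_mono_set
            (iUnion_subset fun i => Ioc_subset_Icc_self.trans (hsub i))
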